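/- Let x̄ ∈ ℝ^n, ε > 0, and let B be the closed ball of radius ε centered at x̄. Let f : ℝ^n → ℝ be Lipschitz on B with constant L_f and satisfy |f(x)| ≤ M for all x ∈ B. Let g : ℝ^n → ℝ be differentiable on a neighborhood of B with g(x) ≥ m₁ > 0 for all x ∈ B, g Lipschitz on B with constant L_g, and the gradient ∇g Lipschitz on B with constant L_{∇g}. Suppose ρ₁ ≥ 0 and v : ℝ^n → ℝ^n satisfy f(y) ≥ f(x) + ⟨v(x), y − x⟩ − (ρ₁/2)‖y − x‖₂² for all x, y ∈ B. Then there exists ρ > 0 such that for all x, y ∈ B: f(y)/g(y) ≥ f(x)/g(x) + ⟨(v(x)·g(x) − f(x)·∇g(x))/g(x)², y − x⟩ − (ρ/2)‖y − x‖₂². -/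

import Mathlib

private lemma abs_mul_le' {x y X Y : ℝ} (hx : |x| ≤ X) (hy : |y| ≤ Y) : |x * y| ≤ X * Y := by
  rw [abs_mul]
  exact mul_le_mul hx hy (abs_nonneg _) ((abs_nonneg x).trans hx)

private lemma quot_key {m₁ Mg MG M Lf Lg LG ρ₁ ε K K' ρ p q a b s t r : ℝ}
    (hm₁ : 0 < m₁) (hM : 0 ≤ M) (hMG : 0 ≤ MG) (hMg : 0 < Mg)
    (hρ₁ : 0 ≤ ρ₁) (hLf : 0 ≤ Lf) (hLg : 0 ≤ Lg) (hLG : 0 ≤ LG) (hε : 0 < ε)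
    (hK0 : 0 ≤ K) (hKm : (M * Lg + M * MG + Lf * Mg) * Mg ≤ K * m₁ ^ 2)
    (hK'1 : K ≤ K') (hK'2 : Lf + ρ₁ * ε ≤ K')
    (hρ0 : 0 ≤ ρ)
    (hρm : M * (MG * Lg + Mg * LG) + K' * (Mg * Lg) + ρ₁ / 2 * Mg ^ 2 ≤ ρ / 2 * m₁ ^ 3)
    (hr0 : 0 ≤ r) (hr2ε : r ≤ 2 * ε)
    (ha1 : m₁ ≤ a) (ha2 : a ≤ Mg) (hb1 : m₁ ≤ b) (hb2 : b ≤ Mg)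
    (hp : |p| ≤ M) (hpq : |p - q| ≤ Lf * r) (hab : |a - b| ≤ Lg * r)
    (ht : |t| ≤ MG * r) (hlin : |b - a - t| ≤ LG * r ^ 2)
    (hsub : p + s - ρ₁ / 2 * r ^ 2 ≤ q) :
    p * a * b + s * (a * b) - p * t * b - ρ / 2 * r ^ 2 * (a ^ 2 * b) ≤ q * a ^ 2 := by
  have ha0 : 0 < a := hm₁.trans_le ha1
  have hb0 : 0 < b := hm₁.trans_le hb1
  have haM : |a| ≤ Mg := abs_le.mpr ⟨by linarith, ha2⟩
  have hbM : |b| ≤ Mg := abs_le.mpr ⟨by linarith, hb2⟩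
  have hab2 : m₁ ^ 2 ≤ a * b := by
    have := mul_le_mul ha1 hb1 hm₁.le (hm₁.le.trans ha1)
    linarith [this]
  have ha2Mg : a ^ 2 ≤ Mg ^ 2 := by
    have := mul_le_mul ha2 ha2 ha0.le hMg.le
    linarith [this]
  have hK'0 : 0 ≤ K' := hK0.trans hK'1
  rcases le_or_gt s (-K * r) with hc | hc
  · -- Case 1: s very negative; conclusion from Lipschitz bound on f alone
    have A1 : -(M * (Mg * (Lg * r))) ≤ p * (a * (a - b)) := by
      have h := abs_mul_le' hp (abs_mul_le' haM hab)
      linarith [neg_abs_le (p * (a * (a - b))), h]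
    have A2 : -(M * (MG * r) * Mg) ≤ p * t * b := by
      have h := abs_mul_le' (abs_mul_le' hp ht) hbM
      linarith [neg_abs_le (p * t * b)]
    have A3 : Lf * r * a ^ 2 ≤ Lf * r * Mg ^ 2 :=
      mul_le_mul_of_nonneg_left ha2Mg (mul_nonneg hLf hr0)
    have A4 : s * (a * b) ≤ -((M * Lg + M * MG + Lf * Mg) * Mg) * r := by
      have h1 : s * (a * b) ≤ (-K * r) * (a * b) :=
        mul_le_mul_of_nonneg_right hc (mul_nonneg ha0.le hb0.le)
      have h2 : (-K * r) * (a * b) ≤ (-K * r) * m₁ ^ 2 :=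
        mul_le_mul_of_nonpos_left hab2
          (by rw [neg_mul]; exact neg_nonpos.mpr (mul_nonneg hK0 hr0))
      have h3 : (M * Lg + M * MG + Lf * Mg) * Mg * r ≤ K * m₁ ^ 2 * r :=
        mul_le_mul_of_nonneg_right hKm hr0
      linarith [h1, h2, h3]
    have A5 : (p - Lf * r) * a ^ 2 ≤ q * a ^ 2 := by
      have h := abs_le.mp hpq
      exact mul_le_mul_of_nonneg_right (by linarith [h.2]) (sq_nonneg a)
    have A6 : (0:ℝ) ≤ ρ / 2 * r ^ 2 * (a ^ 2 * b) :=
      mul_nonneg (mul_nonneg (by linarith) (sq_nonneg r))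
        (mul_nonneg (sq_nonneg a) hb0.le)
    linarith [A1, A2, A3, A4, A5, A6]
  · -- Case 2: |s| ≤ K' * r
    have hρ2 : ρ₁ / 2 * r ^ 2 ≤ ρ₁ * ε * r := by
      have := mul_le_mul_of_nonneg_left hr2ε
        (mul_nonneg (div_nonneg hρ₁ (by norm_num : (0:ℝ) ≤ 2)) hr0)
      linarith [this]
    have hs_ub : s ≤ K' * r := by
      have h1 := (abs_le.mp hpq).1
      have h2 : (Lf + ρ₁ * ε) * r ≤ K' * r := mul_le_mul_of_nonneg_right hK'2 hr0
      linarith [h1, h2, hρ2, hsub]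
    have hs_lb : -(K' * r) ≤ s := by
      have h := mul_le_mul_of_nonneg_right hK'1 hr0
      linarith
    have hs_abs : |s| ≤ K' * r := abs_le.mpr ⟨hs_lb, hs_ub⟩
    have hba : |b - a| ≤ Lg * r := by rw [abs_sub_comm]; exact hab
    have B1 : p * (t * (a - b) + a * (b - a - t))
        ≤ M * ((MG * r) * (Lg * r) + Mg * (LG * r ^ 2)) := by
      have h1 : |t * (a - b) + a * (b - a - t)| ≤ (MG * r) * (Lg * r) + Mg * (LG * r ^ 2) :=
        (abs_add_le _ _).trans (add_le_add (abs_mul_le' ht hab) (abs_mul_le' haM hlin))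
      have h2 := abs_mul_le' hp h1
      linarith [le_abs_self (p * (t * (a - b) + a * (b - a - t)))]
    have B2 : s * (a * (b - a)) ≤ (K' * r) * (Mg * (Lg * r)) := by
      have h2 := abs_mul_le' hs_abs (abs_mul_le' haM hba)
      linarith [le_abs_self (s * (a * (b - a)))]
    have B3 : ρ₁ / 2 * r ^ 2 * a ^ 2 ≤ ρ₁ / 2 * r ^ 2 * Mg ^ 2 :=
      mul_le_mul_of_nonneg_left ha2Mg
        (mul_nonneg (div_nonneg hρ₁ (by norm_num : (0:ℝ) ≤ 2)) (sq_nonneg r))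
    have B4 : (M * (MG * Lg + Mg * LG) + K' * (Mg * Lg) + ρ₁ / 2 * Mg ^ 2) * r ^ 2
        ≤ ρ / 2 * r ^ 2 * (a ^ 2 * b) := by
      have hm3 : m₁ ^ 3 ≤ a ^ 2 * b := by
        have := mul_le_mul (mul_le_mul ha1 ha1 hm₁.le ha0.le) hb1 hm₁.le
          (mul_nonneg ha0.le ha0.le)
        linarith [this]
      have h1 : ρ / 2 * m₁ ^ 3 ≤ ρ / 2 * (a ^ 2 * b) :=
        mul_le_mul_of_nonneg_left hm3 (div_nonneg hρ0 (by norm_num : (0:ℝ) ≤ 2))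
      have h2 := hρm.trans h1
      linarith [mul_le_mul_of_nonneg_right h2 (sq_nonneg r)]
    have B5 : (p + s - ρ₁ / 2 * r ^ 2) * a ^ 2 ≤ q * a ^ 2 :=
      mul_le_mul_of_nonneg_right hsub (sq_nonneg a)
    linarith [B1, B2, B3, B4, B5]

private lemma quot_final {p q a b s t r ρ : ℝ} (ha0 : 0 < a) (hb0 : 0 < b)
    (KEY : p * a * b + s * (a * b) - p * t * b - ρ / 2 * r ^ 2 * (a ^ 2 * b) ≤ q * a ^ 2) :
    p / a + (a ^ 2)⁻¹ * (a * s - p * t) - ρ / 2 * r ^ 2 ≤ q / b := by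
  have ha0' : a ≠ 0 := ne_of_gt ha0
  have hb0' : b ≠ 0 := ne_of_gt hb0
  have e1 : p / a + (a ^ 2)⁻¹ * (a * s - p * t) - ρ / 2 * r ^ 2
      = (p * a * b + s * (a * b) - p * t * b - ρ / 2 * r ^ 2 * (a ^ 2 * b)) / (a ^ 2 * b) := by
    field_simp
    ring
  have e2 : q / b = q * a ^ 2 / (a ^ 2 * b) := by
    field_simp
  rw [e1, e2]
  exact (div_le_div_iff_of_pos_right (by positivity)).mpr KEY

noncomputable section

open Metric Set InnerProductSpace

theorem stmt0 {n : ℕ} (xbar : EuclideanSpace ℝ (Fin n)) (ε : ℝ) (hε : 0 < ε)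
    (B : Set (EuclideanSpace ℝ (Fin n))) (hB : B = Metric.closedBall xbar ε)
    (f g : EuclideanSpace ℝ (Fin n) → ℝ)
    (G v : EuclideanSpace ℝ (Fin n) → EuclideanSpace ℝ (Fin n))
    (Lf M m₁ Lg LG ρ₁ : ℝ)
    (hf_lip : ∀ x ∈ B, ∀ y ∈ B, |f x - f y| ≤ Lf * ‖x - y‖)
    (hf_bd : ∀ x ∈ B, |f x| ≤ M)
    (U : Set (EuclideanSpace ℝ (Fin n))) (hU : IsOpen U) (hBU : B ⊆ U)
    (hg_diff : ∀ x ∈ U, HasGradientAt g (G x) x)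
    (hm₁ : 0 < m₁) (hg_lb : ∀ x ∈ B, m₁ ≤ g x)
    (hg_lip : ∀ x ∈ B, ∀ y ∈ B, |g x - g y| ≤ Lg * ‖x - y‖)
    (hG_lip : ∀ x ∈ B, ∀ y ∈ B, ‖G x - G y‖ ≤ LG * ‖x - y‖)
    (hρ₁ : 0 ≤ ρ₁)
    (hsub : ∀ x ∈ B, ∀ y ∈ B,
      f y ≥ f x + (inner ℝ (v x) (y - x) : ℝ) - ρ₁ / 2 * ‖y - x‖ ^ 2) :
    ∃ ρ > (0 : ℝ), ∀ x ∈ B, ∀ y ∈ B,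
      f y / g y ≥ f x / g x
        + (inner ℝ (((g x) ^ 2)⁻¹ • (g x • v x - f x • G x)) (y - x) : ℝ)
        - ρ / 2 * ‖y - x‖ ^ 2 := by
  subst hB
  have hm0 : m₁ ≠ 0 := ne_of_gt hm₁
  have hxbarB : xbar ∈ closedBall xbar ε := mem_closedBall_self hε.le
  have hM : (0:ℝ) ≤ M := (abs_nonneg _).trans (hf_bd xbar hxbarB)
  set Mg : ℝ := g xbar + |Lg| * ε with hMgdef
  set MG : ℝ := ‖G xbar‖ + |LG| * ε with hMGdef
  have hMg_pos : 0 < Mg := by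
    have h1 : m₁ ≤ g xbar := hg_lb xbar hxbarB
    have h2 : (0:ℝ) ≤ |Lg| * ε := mul_nonneg (abs_nonneg _) hε.le
    rw [hMgdef]; linarith
  have hMG0 : (0:ℝ) ≤ MG := by
    have h2 : (0:ℝ) ≤ |LG| * ε := mul_nonneg (abs_nonneg _) hε.le
    rw [hMGdef]; positivity
  -- pointwise bounds on B
  have hnorm_le : ∀ x ∈ closedBall xbar ε, ‖x - xbar‖ ≤ ε := fun x hx =>
    mem_closedBall_iff_norm.mp hx
  have hg_ub : ∀ x ∈ closedBall xbar ε, g x ≤ Mg := by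
    intro x hx
    have h1 : |g x - g xbar| ≤ Lg * ‖x - xbar‖ := hg_lip x hx xbar hxbarB
    have h2 : Lg * ‖x - xbar‖ ≤ |Lg| * ε :=
      mul_le_mul (le_abs_self _) (hnorm_le x hx) (norm_nonneg _) (abs_nonneg _)
    have h3 : g x - g xbar ≤ |g x - g xbar| := le_abs_self _
    rw [hMgdef]; linarith
  have hG_ub : ∀ x ∈ closedBall xbar ε, ‖G x‖ ≤ MG := by
    intro x hx
    have h1 : ‖G x‖ - ‖G xbar‖ ≤ ‖G x - G xbar‖ := norm_sub_norm_le _ _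
    have h2 : ‖G x - G xbar‖ ≤ LG * ‖x - xbar‖ := hG_lip x hx xbar hxbarB
    have h3 : LG * ‖x - xbar‖ ≤ |LG| * ε :=
      mul_le_mul (le_abs_self _) (hnorm_le x hx) (norm_nonneg _) (abs_nonneg _)
    rw [hMGdef]; linarith
  -- linearization of g along segments in the ball
  have hlin : ∀ x ∈ closedBall xbar ε, ∀ y ∈ closedBall xbar ε,
      |g y - g x - (inner ℝ (G x) (y - x) : ℝ)| ≤ |LG| * ‖y - x‖ ^ 2 := by
    intro x hx y hy
    set S := closedBall xbar ε ∩ closedBall x ‖y - x‖ with hS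
    have hconv : Convex ℝ S := (convex_closedBall _ _).inter (convex_closedBall _ _)
    have hxS : x ∈ S := ⟨hx, mem_closedBall_self (norm_nonneg _)⟩
    have hyS : y ∈ S := ⟨hy, by simp [Metric.mem_closedBall, dist_eq_norm]⟩
    have hd : ∀ z ∈ S, HasFDerivWithinAt (fun w => g w - (toDual ℝ _ (G x)) w)
        (toDual ℝ _ (G z) - toDual ℝ _ (G x)) S z := by
      intro z hz
      exact (((hg_diff z (hBU hz.1)).hasFDerivAt).sub
        ((toDual ℝ _ (G x)).hasFDerivAt)).hasFDerivWithinAt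
    have bound : ∀ z ∈ S, ‖toDual ℝ _ (G z) - toDual ℝ _ (G x)‖ ≤ |LG| * ‖y - x‖ := by
      intro z hz
      rw [← map_sub, LinearIsometryEquiv.norm_map]
      calc ‖G z - G x‖ ≤ LG * ‖z - x‖ := hG_lip z hz.1 x hx
        _ ≤ |LG| * ‖y - x‖ := mul_le_mul (le_abs_self _)
            (mem_closedBall_iff_norm.mp hz.2) (norm_nonneg _) (abs_nonneg _)
    have hmv := hconv.norm_image_sub_le_of_norm_hasFDerivWithin_le hd bound hxS hyS
    simp only [toDual_apply_apply] at hmv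
    rw [Real.norm_eq_abs] at hmv
    calc |g y - g x - (inner ℝ (G x) (y - x) : ℝ)|
        = |(g y - ⟪G x, y⟫_ℝ) - (g x - ⟪G x, x⟫_ℝ)| := by rw [inner_sub_right]; ring_nf
      _ ≤ |LG| * ‖y - x‖ * ‖y - x‖ := hmv
      _ = |LG| * ‖y - x‖ ^ 2 := by ring
  -- the constants
  set K : ℝ := (M * |Lg| + M * MG + |Lf| * Mg) * Mg / m₁ ^ 2 with hKdef
  have hE0 : 0 ≤ M * |Lg| + M * MG + |Lf| * Mg :=
    add_nonneg (add_nonneg (mul_nonneg hM (abs_nonneg _)) (mul_nonneg hM hMG0))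
      (mul_nonneg (abs_nonneg _) hMg_pos.le)
  have hK0 : 0 ≤ K := by
    rw [hKdef]
    exact div_nonneg (mul_nonneg hE0 hMg_pos.le) (pow_nonneg hm₁.le 2)
  have hKm : (M * |Lg| + M * MG + |Lf| * Mg) * Mg ≤ K * m₁ ^ 2 := by
    have : K * m₁ ^ 2 = (M * |Lg| + M * MG + |Lf| * Mg) * Mg := by
      rw [hKdef]; field_simp
    linarith
  set K' : ℝ := K + |Lf| + ρ₁ * ε with hK'def
  have hK'1 : K ≤ K' := by
    have h1 : (0:ℝ) ≤ |Lf| := abs_nonneg _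
    have h2 : (0:ℝ) ≤ ρ₁ * ε := mul_nonneg hρ₁ hε.le
    rw [hK'def]; linarith
  have hK'2 : |Lf| + ρ₁ * ε ≤ K' := by rw [hK'def]; linarith
  have hK'0 : 0 ≤ K' := hK0.trans hK'1
  have hE'0 : 0 ≤ M * (MG * |Lg| + Mg * |LG|) + K' * (Mg * |Lg|) + ρ₁ / 2 * Mg ^ 2 :=
    add_nonneg (add_nonneg
      (mul_nonneg hM (add_nonneg (mul_nonneg hMG0 (abs_nonneg _))
        (mul_nonneg hMg_pos.le (abs_nonneg _))))
      (mul_nonneg hK'0 (mul_nonneg hMg_pos.le (abs_nonneg _))))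
      (mul_nonneg (div_nonneg hρ₁ (by norm_num : (0:ℝ) ≤ 2)) (sq_nonneg _))
  set ρ : ℝ := 2 * (M * (MG * |Lg| + Mg * |LG|) + K' * (Mg * |Lg|) + ρ₁ / 2 * Mg ^ 2) / m₁ ^ 3
      + 1 with hρdef
  have hρpos : 0 < ρ := by
    have h1 : 0 ≤ 2 * (M * (MG * |Lg| + Mg * |LG|) + K' * (Mg * |Lg|) + ρ₁ / 2 * Mg ^ 2) / m₁ ^ 3 :=
      div_nonneg (by linarith) (pow_nonneg hm₁.le 3)
    rw [hρdef]; linarith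
  have hρm' : M * (MG * |Lg| + Mg * |LG|) + K' * (Mg * |Lg|) + ρ₁ / 2 * Mg ^ 2
      ≤ ρ / 2 * m₁ ^ 3 := by
    have heq : ρ / 2 * m₁ ^ 3
        = (M * (MG * |Lg| + Mg * |LG|) + K' * (Mg * |Lg|) + ρ₁ / 2 * Mg ^ 2) + m₁ ^ 3 / 2 := by
      rw [hρdef]; field_simp
    have h3 : 0 < m₁ ^ 3 := pow_pos hm₁ 3
    linarith
  refine ⟨ρ, hρpos, ?_⟩
  intro x hx y hy
  have ha0 : 0 < g x := hm₁.trans_le (hg_lb x hx)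
  have hb0 : 0 < g y := hm₁.trans_le (hg_lb y hy)
  have hr2ε : ‖y - x‖ ≤ 2 * ε := by
    have h1 : dist y x ≤ dist y xbar + dist xbar x := dist_triangle _ _ _
    have h2 : dist y xbar ≤ ε := hy
    have h3 : dist xbar x ≤ ε := by rw [dist_comm]; exact hx
    rw [← dist_eq_norm]; linarith
  have hpq : |f x - f y| ≤ |Lf| * ‖y - x‖ := by
    have h1 := hf_lip x hx y hy
    rw [norm_sub_rev] at h1
    exact h1.trans (mul_le_mul_of_nonneg_right (le_abs_self _) (norm_nonneg _))
  have hab : |g x - g y| ≤ |Lg| * ‖y - x‖ := by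
    have h1 := hg_lip x hx y hy
    rw [norm_sub_rev] at h1
    exact h1.trans (mul_le_mul_of_nonneg_right (le_abs_self _) (norm_nonneg _))
  have ht : |(inner ℝ (G x) (y - x) : ℝ)| ≤ MG * ‖y - x‖ :=
    (abs_real_inner_le_norm _ _).trans
      (mul_le_mul_of_nonneg_right (hG_ub x hx) (norm_nonneg _))
  have hsubxy : f x + (inner ℝ (v x) (y - x) : ℝ) - ρ₁ / 2 * ‖y - x‖ ^ 2 ≤ f y :=
    hsub x hx y hy
  have hinner : (inner ℝ (((g x) ^ 2)⁻¹ • (g x • v x - f x • G x)) (y - x) : ℝ)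
      = ((g x) ^ 2)⁻¹ * (g x * (inner ℝ (v x) (y - x) : ℝ)
          - f x * (inner ℝ (G x) (y - x) : ℝ)) := by
    rw [real_inner_smul_left, inner_sub_left, real_inner_smul_left, real_inner_smul_left]
  rw [ge_iff_le, hinner]
  exact quot_final ha0 hb0
    (quot_key hm₁ hM hMG0 hMg_pos hρ₁ (abs_nonneg Lf) (abs_nonneg Lg) (abs_nonneg LG) hε
      hK0 hKm hK'1 hK'2 hρpos.le hρm' (norm_nonneg _) hr2ε
      (hg_lb x hx) (hg_ub x hx) (hg_lb y hy) (hg_ub y hy)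
      (hf_bd x hx) hpq hab ht (hlin x hx y hy) hsubxy)
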